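/- arXiv:1403.4231 — 3 statements merged into one kernel-verified Lean document; each statement's English description precedes it below -/
import Mathlib

section
/- In the deformation setting over a square-zero parameter λ, the product • makes A₁ = A ⊕ λA an associative (in general noncommutative) algebra; and for every module with Leibniz operators E, the deformed left and right actions satisfy (a • b) • e = a • (b • e), (a • e) • b = a • (e • b) and (e • a) • b = e • (a • b) for all a, b ∈ A₁ and e ∈ E₁. Hence E₁ is an A₁-bimodule. -/
namespace Stmt2

/-- The semiclassical data: derivations `δ_i` and an antisymmetric `ω^{ij}` with
entries in a commutative algebra `A` over a field `K` of characteristic zero. -/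
structure DefData (K A : Type) [Field K] [CharZero K] [CommRing A] [Algebra K A]
    (n : ℕ) where
  δ : Fin n → A → A
  ω : Fin n → Fin n → A
  δ_add : ∀ i a b, δ i (a + b) = δ i a + δ i b
  δ_leibniz : ∀ i a b, δ i (a * b) = a * δ i b + b * δ i a
  ω_anti : ∀ i j, ω i j = - ω j i

variable {K A : Type} [Field K] [CharZero K] [CommRing A] [Algebra K A] {n : ℕ}

/-- The scalar `1/2` in `A`. -/
noncomputable def half (K A : Type) [Field K] [CharZero K] [CommRing A] [Algebra K A] : A :=
  algebraMap K A (2⁻¹ : K)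

/-- The deformed product on `A₁ = A ⊕ λA` (a pair `(a₀, a₁)` stands for `a₀ + λ a₁`,
with `λ² = 0`):  `a • b = ab + (λ/2) ω^{ij} δ_i(a) δ_j(b)`, extended `λ`-bilinearly. -/
noncomputable def mul1 (D : DefData K A n) (a b : A × A) : A × A :=
  (a.1 * b.1,
   a.1 * b.2 + a.2 * b.1 + half K A * ∑ i, ∑ j, D.ω i j * D.δ i a.1 * D.δ j b.1)

/-- A module with Leibniz operators: an `A`-module `E` with additive maps `∇_{E,j}`
satisfying `∇_{E,j}(a e) = a ∇_{E,j} e + δ_j(a) e`. -/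
structure LeibMod (D : DefData K A n) (E : Type) [AddCommGroup E] [Module A E] where
  nab : Fin n → E → E
  nab_add : ∀ j e f, nab j (e + f) = nab j e + nab j f
  nab_smul : ∀ j a e, nab j (a • e) = a • nab j e + D.δ j a • e

variable {D : DefData K A n} {E : Type} [AddCommGroup E] [Module A E]

/-- Deformed left action of `A₁` on `E₁ = E ⊕ λE`:
`a • e = a e + (λ/2) ω^{ij} δ_i(a) ∇_{E,j}(e)`, extended `λ`-bilinearly. -/
noncomputable def lact (L : LeibMod D E) (a : A × A) (e : E × E) : E × E :=
  (a.1 • e.1,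
   a.1 • e.2 + a.2 • e.1 + ∑ i, ∑ j, (half K A * D.ω i j * D.δ i a.1) • L.nab j e.1)

/-- Deformed right action of `A₁` on `E₁ = E ⊕ λE`:
`e • a = a e − (λ/2) ω^{ij} δ_i(a) ∇_{E,j}(e)`, extended `λ`-bilinearly. -/
noncomputable def ract (L : LeibMod D E) (e : E × E) (a : A × A) : E × E :=
  (a.1 • e.1,
   a.1 • e.2 + a.2 • e.1 - ∑ i, ∑ j, (half K A * D.ω i j * D.δ i a.1) • L.nab j e.1)


/-- Antisymmetry swap for double sums of scalars. -/
lemma swapA (D : DefData K A n) (x y : A) :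
    ∑ i, ∑ j, half K A * (D.δ i x * (D.δ j y * D.ω i j))
      = -∑ i, ∑ j, half K A * (D.δ i y * (D.δ j x * D.ω i j)) := by
  rw [Finset.sum_comm, ← Finset.sum_neg_distrib]
  refine Finset.sum_congr rfl fun j _ => ?_
  rw [← Finset.sum_neg_distrib]
  refine Finset.sum_congr rfl fun i _ => ?_
  rw [D.ω_anti j i]; ring

/-- Antisymmetry swap for double sums of scalar multiples of a fixed vector. -/
lemma swap_smul (D : DefData K A n) {E : Type} [AddCommGroup E] [Module A E]
    (x y : A) (v : E) :
    ∑ i, ∑ j, (half K A * (D.δ i x * (D.δ j y * D.ω i j))) • v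
      = -∑ i, ∑ j, (half K A * (D.δ i y * (D.δ j x * D.ω i j))) • v := by
  simp only [← Finset.sum_smul, ← neg_smul]
  rw [swapA D x y]

/-- the deformed product makes `A₁ = A ⊕ λA` associative, and the deformed
left and right actions make `E₁ = E ⊕ λE` an `A₁`-bimodule: `(a•b)•e = a•(b•e)`,
`(a•e)•b = a•(e•b)` and `(e•a)•b = e•(a•b)`. -/
theorem statement_2 (D : DefData K A n) {E : Type} [AddCommGroup E] [Module A E]
    (L : LeibMod D E) :
    (∀ a b c : A × A, mul1 D (mul1 D a b) c = mul1 D a (mul1 D b c)) ∧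
    (∀ (a b : A × A) (e : E × E), lact L (mul1 D a b) e = lact L a (lact L b e)) ∧
    (∀ (a : A × A) (e : E × E) (b : A × A), ract L (lact L a e) b = lact L a (ract L e b)) ∧
    (∀ (e : E × E) (a b : A × A), ract L (ract L e a) b = ract L e (mul1 D a b)) := by
  refine ⟨fun a b c => ?_, fun a b e => ?_, fun a e b => ?_, fun e a b => ?_⟩
  · simp only [mul1, Prod.mk.injEq, D.δ_leibniz, add_mul, mul_add, Finset.sum_add_distrib,
      Finset.mul_sum]
    refine ⟨by ring, ?_⟩
    ring_nf
    simp only [Finset.mul_sum, mul_comm, mul_left_comm, mul_assoc]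
    ring_nf
  · simp only [lact, mul1, Prod.mk.injEq, L.nab_smul, D.δ_leibniz, smul_add, add_smul,
      smul_smul, Finset.smul_sum, Finset.sum_add_distrib, Finset.sum_smul, Finset.mul_sum]
    refine ⟨trivial, ?_⟩
    simp only [add_mul, mul_add, add_smul, Finset.sum_add_distrib, mul_comm, mul_left_comm,
      mul_assoc]
    abel
  · simp only [lact, ract, Prod.mk.injEq, L.nab_smul, D.δ_leibniz, smul_add, smul_sub, add_smul,
      sub_smul, smul_smul, Finset.smul_sum, Finset.sum_add_distrib, Finset.sum_sub_distrib,
      Finset.sum_smul, Finset.mul_sum]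
    refine ⟨by rw [mul_comm], ?_⟩
    simp only [add_mul, mul_add, add_smul, Finset.sum_add_distrib, mul_comm, mul_left_comm,
      mul_assoc]
    rw [swap_smul D b.1 a.1 e.1]
    abel
  · simp only [lact, ract, mul1, Prod.mk.injEq, L.nab_smul, D.δ_leibniz, smul_add, smul_sub,
      add_smul, sub_smul, smul_smul, Finset.smul_sum, Finset.sum_add_distrib,
      Finset.sum_sub_distrib, Finset.sum_smul, Finset.mul_sum]
    refine ⟨by rw [mul_comm], ?_⟩
    simp only [add_mul, mul_add, add_smul, Finset.sum_add_distrib, mul_comm, mul_left_comm,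
      mul_assoc]
    rw [swap_smul D b.1 a.1 e.1]
    abel

end Stmt2
end

section
/- Let k be a commutative ring, E and W k-modules, λ a square-zero formal parameter (work with k[λ]/(λ²)-linear maps between the scalar extensions of tensor products). Suppose σ_E : E ⊗ W → W ⊗ E and σ_W : W ⊗ W → W ⊗ W have the form σ_E(e ⊗ ξ) = ξ ⊗ e + λ Σ_α T_α(ξ) ⊗ T'_α(e) and σ_W(η ⊗ ξ) = ξ ⊗ η + λ Σ_α S_α(ξ) ⊗ S'_α(η), for finitely many k-linear maps T_α, S_α, S'_α : W → W and T'_α : E → E. Then the braid relation (σ_W ⊗ id_E) ∘ (id_W ⊗ σ_E) ∘ (σ_E ⊗ id_W) = (id_W ⊗ σ_E) ∘ (σ_E ⊗ id_W) ∘ (id_E ⊗ σ_W) holds as maps E ⊗ W ⊗ W → W ⊗ W ⊗ E over k[λ]/(λ²); indeed both sides send e ⊗ ξ ⊗ η to η ⊗ ξ ⊗ e + λ Σ_α (η ⊗ T_α(ξ) ⊗ T'_α(e) + T_α(η) ⊗ ξ ⊗ T'_α(e) + S_α(η) ⊗ S'_α(ξ) ⊗ e). -/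
open scoped TensorProduct
open DualNumber

namespace Stmt6

variable (k : Type) [CommRing k]

/-- Scalar extension by the dual numbers `k[λ]/(λ²)`. -/
abbrev Ext (M : Type) [AddCommGroup M] [Module k M] : Type := DualNumber k ⊗[k] M

lemma eps_smul_eps_smul {M : Type} [AddCommMonoid M] [Module (DualNumber k) M] (x : M) :
    (ε : DualNumber k) • (ε : DualNumber k) • x = 0 := by
  rw [smul_smul, DualNumber.eps_mul_eps, zero_smul]

set_option synthInstance.maxHeartbeats 1000000 in
lemma ext_span {M : Type} [AddCommGroup M] [Module k M] (x : Ext k M) :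
    ∃ m m' : M, x = (1 : DualNumber k) ⊗ₜ[k] m
      + (ε : DualNumber k) • ((1 : DualNumber k) ⊗ₜ[k] m') := by
  induction x using TensorProduct.induction_on with
  | zero => exact ⟨0, 0, by simp⟩
  | tmul d m =>
    refine ⟨d.fst • m, d.snd • m, ?_⟩
    calc d ⊗ₜ[k] m = d • ((1 : DualNumber k) ⊗ₜ[k] m) := by
          rw [TensorProduct.smul_tmul', smul_eq_mul, mul_one]
      _ = _ := by
          conv_lhs => rw [← TrivSqZeroExt.inl_fst_add_inr_snd_eq d]
          rw [add_smul,
            show (TrivSqZeroExt.inl d.fst : DualNumber k) • (((1 : DualNumber k) ⊗ₜ[k] m) : Ext k M)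
              = (1 : DualNumber k) ⊗ₜ[k] (d.fst • m) by
              rw [show (TrivSqZeroExt.inl d.fst : DualNumber k)
                  = algebraMap k (DualNumber k) d.fst from rfl,
                algebraMap_smul, TensorProduct.tmul_smul],
            DualNumber.inr_eq_smul_eps, smul_assoc, smul_comm, ← TensorProduct.tmul_smul]
  | add x y hx hy =>
    obtain ⟨m1, m1', rfl⟩ := hx
    obtain ⟨m2, m2', rfl⟩ := hy
    exact ⟨m1 + m2, m1' + m2', by
      rw [TensorProduct.tmul_add, TensorProduct.tmul_add, smul_add]; abel⟩

section Aux
variable (E W : Type) [AddCommGroup E] [AddCommGroup W]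
    [Module k E] [Module k W]
    (ι : Type) [Fintype ι]
    (T S S' : ι → W →ₗ[k] W) (T' : ι → E →ₗ[k] E)
    (σE : Ext k E ⊗[DualNumber k] Ext k W →ₗ[DualNumber k]
      Ext k W ⊗[DualNumber k] Ext k E)
    (σW : Ext k W ⊗[DualNumber k] Ext k W →ₗ[DualNumber k]
      Ext k W ⊗[DualNumber k] Ext k W)
    (hσE : ∀ (e : E) (ξ : W),
      σE (((1 : DualNumber k) ⊗ₜ[k] e) ⊗ₜ[DualNumber k] ((1 : DualNumber k) ⊗ₜ[k] ξ))
        = ((1 : DualNumber k) ⊗ₜ[k] ξ) ⊗ₜ[DualNumber k] ((1 : DualNumber k) ⊗ₜ[k] e)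
          + (ε : DualNumber k) •
              ∑ α : ι, ((1 : DualNumber k) ⊗ₜ[k] (T α ξ)) ⊗ₜ[DualNumber k]
                ((1 : DualNumber k) ⊗ₜ[k] (T' α e)))
    (hσW : ∀ (η ξ : W),
      σW (((1 : DualNumber k) ⊗ₜ[k] η) ⊗ₜ[DualNumber k] ((1 : DualNumber k) ⊗ₜ[k] ξ))
        = ((1 : DualNumber k) ⊗ₜ[k] ξ) ⊗ₜ[DualNumber k] ((1 : DualNumber k) ⊗ₜ[k] η)
          + (ε : DualNumber k) •
              ∑ α : ι, ((1 : DualNumber k) ⊗ₜ[k] (S α ξ)) ⊗ₜ[DualNumber k]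
                ((1 : DualNumber k) ⊗ₜ[k] (S' α η)))

include hσE hσW in
set_option maxHeartbeats 2000000 in
lemma lhs_apply (e : E) (ξ η : W) :
    (TensorProduct.map σW LinearMap.id ∘ₗ
        (TensorProduct.assoc (DualNumber k) (Ext k W) (Ext k W) (Ext k E)).symm.toLinearMap ∘ₗ
        TensorProduct.map LinearMap.id σE ∘ₗ
        (TensorProduct.assoc (DualNumber k) (Ext k W) (Ext k E) (Ext k W)).toLinearMap ∘ₗ
        TensorProduct.map σE LinearMap.id)
        ((((1 : DualNumber k) ⊗ₜ[k] e) ⊗ₜ[DualNumber k] ((1 : DualNumber k) ⊗ₜ[k] ξ))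
          ⊗ₜ[DualNumber k] ((1 : DualNumber k) ⊗ₜ[k] η))
      = (((1 : DualNumber k) ⊗ₜ[k] η) ⊗ₜ[DualNumber k] ((1 : DualNumber k) ⊗ₜ[k] ξ))
          ⊗ₜ[DualNumber k] ((1 : DualNumber k) ⊗ₜ[k] e)
        + (ε : DualNumber k) •
            ∑ α : ι,
              ((((1 : DualNumber k) ⊗ₜ[k] η) ⊗ₜ[DualNumber k]
                  ((1 : DualNumber k) ⊗ₜ[k] (T α ξ))) ⊗ₜ[DualNumber k]
                  ((1 : DualNumber k) ⊗ₜ[k] (T' α e))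
               + (((1 : DualNumber k) ⊗ₜ[k] (T α η)) ⊗ₜ[DualNumber k]
                  ((1 : DualNumber k) ⊗ₜ[k] ξ)) ⊗ₜ[DualNumber k]
                  ((1 : DualNumber k) ⊗ₜ[k] (T' α e))
               + (((1 : DualNumber k) ⊗ₜ[k] (S α η)) ⊗ₜ[DualNumber k]
                  ((1 : DualNumber k) ⊗ₜ[k] (S' α ξ))) ⊗ₜ[DualNumber k]
                  ((1 : DualNumber k) ⊗ₜ[k] e)) := by
  simp only [LinearMap.comp_apply, LinearEquiv.coe_coe, TensorProduct.map_tmul,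
    LinearMap.id_coe, id_eq, hσE, hσW, TensorProduct.add_tmul, TensorProduct.tmul_add,
    ← TensorProduct.smul_tmul', TensorProduct.tmul_smul, map_add, map_smul, map_sum,
    TensorProduct.sum_tmul, TensorProduct.tmul_sum, TensorProduct.assoc_tmul,
    TensorProduct.assoc_symm_tmul, Finset.smul_sum, eps_smul_eps_smul, Finset.sum_const_zero,
    add_zero, smul_add, Finset.sum_add_distrib]
  abel

include hσE hσW in
set_option maxHeartbeats 2000000 in
lemma rhs_apply (e : E) (ξ η : W) :
    ((TensorProduct.assoc (DualNumber k) (Ext k W) (Ext k W) (Ext k E)).symm.toLinearMap ∘ₗ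
        TensorProduct.map LinearMap.id σE ∘ₗ
        (TensorProduct.assoc (DualNumber k) (Ext k W) (Ext k E) (Ext k W)).toLinearMap ∘ₗ
        TensorProduct.map σE LinearMap.id ∘ₗ
        (TensorProduct.assoc (DualNumber k) (Ext k E) (Ext k W) (Ext k W)).symm.toLinearMap ∘ₗ
        TensorProduct.map LinearMap.id σW ∘ₗ
        (TensorProduct.assoc (DualNumber k) (Ext k E) (Ext k W) (Ext k W)).toLinearMap)
        ((((1 : DualNumber k) ⊗ₜ[k] e) ⊗ₜ[DualNumber k] ((1 : DualNumber k) ⊗ₜ[k] ξ))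
          ⊗ₜ[DualNumber k] ((1 : DualNumber k) ⊗ₜ[k] η))
      = (((1 : DualNumber k) ⊗ₜ[k] η) ⊗ₜ[DualNumber k] ((1 : DualNumber k) ⊗ₜ[k] ξ))
          ⊗ₜ[DualNumber k] ((1 : DualNumber k) ⊗ₜ[k] e)
        + (ε : DualNumber k) •
            ∑ α : ι,
              ((((1 : DualNumber k) ⊗ₜ[k] η) ⊗ₜ[DualNumber k]
                  ((1 : DualNumber k) ⊗ₜ[k] (T α ξ))) ⊗ₜ[DualNumber k]
                  ((1 : DualNumber k) ⊗ₜ[k] (T' α e))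
               + (((1 : DualNumber k) ⊗ₜ[k] (T α η)) ⊗ₜ[DualNumber k]
                  ((1 : DualNumber k) ⊗ₜ[k] ξ)) ⊗ₜ[DualNumber k]
                  ((1 : DualNumber k) ⊗ₜ[k] (T' α e))
               + (((1 : DualNumber k) ⊗ₜ[k] (S α η)) ⊗ₜ[DualNumber k]
                  ((1 : DualNumber k) ⊗ₜ[k] (S' α ξ))) ⊗ₜ[DualNumber k]
                  ((1 : DualNumber k) ⊗ₜ[k] e)) := by
  simp only [LinearMap.comp_apply, LinearEquiv.coe_coe, TensorProduct.map_tmul,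
    LinearMap.id_coe, id_eq, hσE, hσW, TensorProduct.add_tmul, TensorProduct.tmul_add,
    ← TensorProduct.smul_tmul', TensorProduct.tmul_smul, map_add, map_smul, map_sum,
    TensorProduct.sum_tmul, TensorProduct.tmul_sum, TensorProduct.assoc_tmul,
    TensorProduct.assoc_symm_tmul, Finset.smul_sum, eps_smul_eps_smul, Finset.sum_const_zero,
    add_zero, smul_add, Finset.sum_add_distrib]
  abel

end Aux

set_option maxHeartbeats 4000000
set_option synthInstance.maxHeartbeats 1000000

/-- order-`λ` deformations of the flip braiding satisfy the braid relation.
If `σ_E(e ⊗ ξ) = ξ ⊗ e + λ Σ_α T_α(ξ) ⊗ T'_α(e)` and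
`σ_W(η ⊗ ξ) = ξ ⊗ η + λ Σ_α S_α(ξ) ⊗ S'_α(η)` over `k[λ]/(λ²)`, then
`(σ_W ⊗ id)(id ⊗ σ_E)(σ_E ⊗ id) = (id ⊗ σ_E)(σ_E ⊗ id)(id ⊗ σ_W)` and both sides send
`e ⊗ ξ ⊗ η` to
`η ⊗ ξ ⊗ e + λ Σ_α (η ⊗ T_α ξ ⊗ T'_α e + T_α η ⊗ ξ ⊗ T'_α e + S_α η ⊗ S'_α ξ ⊗ e)`. -/
theorem statement_6 (E W : Type) [AddCommGroup E] [AddCommGroup W]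
    [Module k E] [Module k W]
    (ι : Type) [Fintype ι]
    (T S S' : ι → W →ₗ[k] W) (T' : ι → E →ₗ[k] E)
    (σE : Ext k E ⊗[DualNumber k] Ext k W →ₗ[DualNumber k]
      Ext k W ⊗[DualNumber k] Ext k E)
    (σW : Ext k W ⊗[DualNumber k] Ext k W →ₗ[DualNumber k]
      Ext k W ⊗[DualNumber k] Ext k W)
    (hσE : ∀ (e : E) (ξ : W),
      σE (((1 : DualNumber k) ⊗ₜ[k] e) ⊗ₜ[DualNumber k] ((1 : DualNumber k) ⊗ₜ[k] ξ))
        = ((1 : DualNumber k) ⊗ₜ[k] ξ) ⊗ₜ[DualNumber k] ((1 : DualNumber k) ⊗ₜ[k] e)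
          + (ε : DualNumber k) •
              ∑ α : ι, ((1 : DualNumber k) ⊗ₜ[k] (T α ξ)) ⊗ₜ[DualNumber k]
                ((1 : DualNumber k) ⊗ₜ[k] (T' α e)))
    (hσW : ∀ (η ξ : W),
      σW (((1 : DualNumber k) ⊗ₜ[k] η) ⊗ₜ[DualNumber k] ((1 : DualNumber k) ⊗ₜ[k] ξ))
        = ((1 : DualNumber k) ⊗ₜ[k] ξ) ⊗ₜ[DualNumber k] ((1 : DualNumber k) ⊗ₜ[k] η)
          + (ε : DualNumber k) •
              ∑ α : ι, ((1 : DualNumber k) ⊗ₜ[k] (S α ξ)) ⊗ₜ[DualNumber k]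
                ((1 : DualNumber k) ⊗ₜ[k] (S' α η))) :
    (TensorProduct.map σW LinearMap.id ∘ₗ
        (TensorProduct.assoc (DualNumber k) (Ext k W) (Ext k W) (Ext k E)).symm.toLinearMap ∘ₗ
        TensorProduct.map LinearMap.id σE ∘ₗ
        (TensorProduct.assoc (DualNumber k) (Ext k W) (Ext k E) (Ext k W)).toLinearMap ∘ₗ
        TensorProduct.map σE LinearMap.id
      = (TensorProduct.assoc (DualNumber k) (Ext k W) (Ext k W) (Ext k E)).symm.toLinearMap ∘ₗ
        TensorProduct.map LinearMap.id σE ∘ₗ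
        (TensorProduct.assoc (DualNumber k) (Ext k W) (Ext k E) (Ext k W)).toLinearMap ∘ₗ
        TensorProduct.map σE LinearMap.id ∘ₗ
        (TensorProduct.assoc (DualNumber k) (Ext k E) (Ext k W) (Ext k W)).symm.toLinearMap ∘ₗ
        TensorProduct.map LinearMap.id σW ∘ₗ
        (TensorProduct.assoc (DualNumber k) (Ext k E) (Ext k W) (Ext k W)).toLinearMap) ∧
    (∀ (e : E) (ξ η : W),
      (TensorProduct.map σW LinearMap.id ∘ₗ
        (TensorProduct.assoc (DualNumber k) (Ext k W) (Ext k W) (Ext k E)).symm.toLinearMap ∘ₗ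
        TensorProduct.map LinearMap.id σE ∘ₗ
        (TensorProduct.assoc (DualNumber k) (Ext k W) (Ext k E) (Ext k W)).toLinearMap ∘ₗ
        TensorProduct.map σE LinearMap.id)
        ((((1 : DualNumber k) ⊗ₜ[k] e) ⊗ₜ[DualNumber k] ((1 : DualNumber k) ⊗ₜ[k] ξ))
          ⊗ₜ[DualNumber k] ((1 : DualNumber k) ⊗ₜ[k] η))
      = (((1 : DualNumber k) ⊗ₜ[k] η) ⊗ₜ[DualNumber k] ((1 : DualNumber k) ⊗ₜ[k] ξ))
          ⊗ₜ[DualNumber k] ((1 : DualNumber k) ⊗ₜ[k] e)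
        + (ε : DualNumber k) •
            ∑ α : ι,
              ((((1 : DualNumber k) ⊗ₜ[k] η) ⊗ₜ[DualNumber k]
                  ((1 : DualNumber k) ⊗ₜ[k] (T α ξ))) ⊗ₜ[DualNumber k]
                  ((1 : DualNumber k) ⊗ₜ[k] (T' α e))
               + (((1 : DualNumber k) ⊗ₜ[k] (T α η)) ⊗ₜ[DualNumber k]
                  ((1 : DualNumber k) ⊗ₜ[k] ξ)) ⊗ₜ[DualNumber k]
                  ((1 : DualNumber k) ⊗ₜ[k] (T' α e))
               + (((1 : DualNumber k) ⊗ₜ[k] (S α η)) ⊗ₜ[DualNumber k]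
                  ((1 : DualNumber k) ⊗ₜ[k] (S' α ξ))) ⊗ₜ[DualNumber k]
                  ((1 : DualNumber k) ⊗ₜ[k] e))) := by
  constructor
  · apply TensorProduct.ext'
    intro p z
    induction p using TensorProduct.induction_on with
    | zero => rw [TensorProduct.zero_tmul, map_zero, map_zero]
    | add p q hp hq => rw [TensorProduct.add_tmul, map_add, map_add, hp, hq]
    | tmul x y =>
      have key : ∀ (e : E) (ξ η : W),
          (TensorProduct.map σW LinearMap.id ∘ₗ
            (TensorProduct.assoc (DualNumber k) (Ext k W) (Ext k W) (Ext k E)).symm.toLinearMap ∘ₗ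
            TensorProduct.map LinearMap.id σE ∘ₗ
            (TensorProduct.assoc (DualNumber k) (Ext k W) (Ext k E) (Ext k W)).toLinearMap ∘ₗ
            TensorProduct.map σE LinearMap.id)
            ((((1 : DualNumber k) ⊗ₜ[k] e) ⊗ₜ[DualNumber k] ((1 : DualNumber k) ⊗ₜ[k] ξ))
              ⊗ₜ[DualNumber k] ((1 : DualNumber k) ⊗ₜ[k] η))
          = ((TensorProduct.assoc (DualNumber k) (Ext k W) (Ext k W) (Ext k E)).symm.toLinearMap ∘ₗ
            TensorProduct.map LinearMap.id σE ∘ₗ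
            (TensorProduct.assoc (DualNumber k) (Ext k W) (Ext k E) (Ext k W)).toLinearMap ∘ₗ
            TensorProduct.map σE LinearMap.id ∘ₗ
            (TensorProduct.assoc (DualNumber k) (Ext k E) (Ext k W) (Ext k W)).symm.toLinearMap ∘ₗ
            TensorProduct.map LinearMap.id σW ∘ₗ
            (TensorProduct.assoc (DualNumber k) (Ext k E) (Ext k W) (Ext k W)).toLinearMap)
            ((((1 : DualNumber k) ⊗ₜ[k] e) ⊗ₜ[DualNumber k] ((1 : DualNumber k) ⊗ₜ[k] ξ))
              ⊗ₜ[DualNumber k] ((1 : DualNumber k) ⊗ₜ[k] η)) := fun e ξ η =>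
        (lhs_apply k E W ι T S S' T' σE σW hσE hσW e ξ η).trans
          (rhs_apply k E W ι T S S' T' σE σW hσE hσW e ξ η).symm
      obtain ⟨e, e', rfl⟩ := ext_span k x
      obtain ⟨ξ, ξ', rfl⟩ := ext_span k y
      obtain ⟨η, η', rfl⟩ := ext_span k z
      simp only [TensorProduct.add_tmul, TensorProduct.tmul_add, ← TensorProduct.smul_tmul',
        TensorProduct.tmul_smul, map_add, map_smul, eps_smul_eps_smul, smul_zero, map_zero,
        add_zero, zero_add, key]
  · exact fun e ξ η => lhs_apply k E W ι T S S' T' σE σW hσE hσW e ξ η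

end Stmt6
end

section
/- Let M be a module over a commutative ring in which 2 is invertible, ι an index type, and B, C : ι × ι × ι → M functions with B(k,n,m) = B(k,m,n) and C(k,n,m) = −C(k,m,n) for all k, n, m. Then there exists a unique K : ι × ι × ι → M satisfying K(n,k,m) + K(m,k,n) = B(k,n,m) and K(k,n,m) − K(k,m,n) = C(k,n,m) for all k, n, m; it is given explicitly by K(n,k,m) = (1/2)[B(k,n,m) − B(n,k,m) + B(m,n,k) + C(m,n,k) + C(k,n,m) + C(n,k,m)]. -/
namespace Stmt17

/-- the linear system underlying the quantum Koszul formula. Given `B`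
symmetric in its last two arguments and `C` antisymmetric in its last two arguments,
there is a unique `K` with `K(n,k,m) + K(m,k,n) = B(k,n,m)` and
`K(k,n,m) − K(k,m,n) = C(k,n,m)`, given by the explicit formula
`K(n,k,m) = (1/2)[B(k,n,m) − B(n,k,m) + B(m,n,k) + C(m,n,k) + C(k,n,m) + C(n,k,m)]`. -/
theorem statement_17 {R M ι : Type} [CommRing R] [AddCommGroup M] [Module R M]
    [Invertible (2 : R)]
    (B C : ι → ι → ι → M)
    (hB : ∀ k n m, B k n m = B k m n)
    (hC : ∀ k n m, C k n m = - C k m n) :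
    (∃! K : ι → ι → ι → M,
      ∀ k n m, K n k m + K m k n = B k n m ∧ K k n m - K k m n = C k n m) ∧
    (∀ K : ι → ι → ι → M,
      (∀ k n m, K n k m + K m k n = B k n m ∧ K k n m - K k m n = C k n m) →
      ∀ n k m, K n k m
        = (⅟(2 : R)) • (B k n m - B n k m + B m n k + C m n k + C k n m + C n k m)) := by
  have key : ∀ K : ι → ι → ι → M,
      (∀ k n m, K n k m + K m k n = B k n m ∧ K k n m - K k m n = C k n m) →
      ∀ n k m, K n k m
        = (⅟(2 : R)) • (B k n m - B n k m + B m n k + C m n k + C k n m + C n k m) := by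
    intro K hK n k m
    have h2K : (2:R) • K n k m
        = B k n m - B n k m + B m n k + C m n k + C k n m + C n k m := by
      rw [← (hK k n m).1, ← (hK n k m).1, ← (hK m n k).1, ← (hK m n k).2,
        ← (hK k n m).2, ← (hK n k m).2, two_smul]
      abel
    calc K n k m = (⅟(2:R)) • ((2:R) • K n k m) := by
          rw [smul_smul, invOf_mul_self, one_smul]
      _ = _ := by rw [h2K]
  set K₀ : ι → ι → ι → M := fun n k m =>
    (⅟(2 : R)) • (B k n m - B n k m + B m n k + C m n k + C k n m + C n k m) with hK₀
  have hsat : ∀ k n m, K₀ n k m + K₀ m k n = B k n m ∧ K₀ k n m - K₀ k m n = C k n m := by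
    intro k n m
    constructor
    · have : (B k n m - B n k m + B m n k + C m n k + C k n m + C n k m)
          + (B k m n - B m k n + B n m k + C n m k + C k m n + C m k n)
          = (2:R) • B k n m := by
        rw [hB k m n, hB n m k, hB m k n, hC n m k, hC k m n, hC m k n, two_smul]
        abel
      rw [hK₀]
      simp only
      rw [← smul_add, this, smul_smul, invOf_mul_self, one_smul]
    · have : (B n k m - B k n m + B m k n + C m k n + C n k m + C k n m)
          - (B m k n - B k m n + B n k m + C n k m + C m k n + C k m n)
          = (2:R) • C k n m := by
        rw [hB k m n, hC k m n, two_smul]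
        abel
      rw [hK₀]
      simp only
      rw [← smul_sub, this, smul_smul, invOf_mul_self, one_smul]
  refine ⟨⟨K₀, hsat, ?_⟩, key⟩
  intro K hK
  funext n k m
  rw [key K hK n k m, hK₀]

end Stmt17
end
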